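/- For any field k, the set of (images in A_k of) words in the letters x_1, …, x_7 that contain none of x_7x_6, x_7x_5, x_7x_4, x_7x_3, x_7x_2, x_7x_1, x_6x_1 as a subword forms a k-vector-space basis of A_k. -/

import Mathlib

/- The Fano-plane structure constants ε^{ijk}.  Indices `0,…,6` correspond to labels `1,…,7`,
so the directed lines 123, 145, 167, 246, 275, 374, 365 become the triples below. -/
def fanoTriples : List (Fin 7 × Fin 7 × Fin 7) :=
  [(0, 1, 2), (0, 3, 4), (0, 5, 6), (1, 3, 5), (1, 6, 4), (2, 6, 3), (2, 5, 4)]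

/-- All cyclic permutations of the directed Fano lines. -/
def fanoPlus : List (Fin 7 × Fin 7 × Fin 7) :=
  fanoTriples.flatMap fun t => [(t.1, t.2.1, t.2.2), (t.2.1, t.2.2, t.1), (t.2.2, t.1, t.2.1)]

/-- The totally antisymmetric symbol `ε^{ijk}`. -/
def eps (i j k : Fin 7) : ℤ :=
  if (i, j, k) ∈ fanoPlus then 1 else if (j, i, k) ∈ fanoPlus then -1 else 0

/-- The defining relation `r_ℓ = Σ_{m,n} ε^{ℓmn} x_m x_n` in the free algebra on `x_1,…,x_7`. -/
noncomputable def relElem (k : Type*) [Field k] (ℓ : Fin 7) : FreeAlgebra k (Fin 7) :=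
  ∑ m : Fin 7, ∑ n : Fin 7, eps ℓ m n • (FreeAlgebra.ι k m * FreeAlgebra.ι k n)

/-- The relation identifying each `r_ℓ` with `0`; quotienting by it imposes the two-sided
ideal generated by `r_1, …, r_7`. -/
inductive Arel (k : Type*) [Field k] : FreeAlgebra k (Fin 7) → FreeAlgebra k (Fin 7) → Prop
  | mk (ℓ : Fin 7) : Arel k (relElem k ℓ) 0

/-- The algebra `A_k = k⟨x_1,…,x_7⟩/(r_1,…,r_7)`. -/
abbrev SmithA (k : Type*) [Field k] : Type _ := RingQuot (Arel k)

/-- The images of the generators `x_i` in `A_k`. -/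
noncomputable def xg (k : Type*) [Field k] (i : Fin 7) : SmithA k :=
  RingQuot.mkAlgHom k (Arel k) (FreeAlgebra.ι k i)

/-- The forbidden subwords `x_7x_6, x_7x_5, x_7x_4, x_7x_3, x_7x_2, x_7x_1, x_6x_1`
(recall index `i : Fin 7` stands for the generator `x_{i+1}`). -/
def badPairs : List (Fin 7 × Fin 7) :=
  [(6, 5), (6, 4), (6, 3), (6, 2), (6, 1), (6, 0), (5, 0)]

/-- A word in `x_1,…,x_7` is good if it contains none of the seven bad subwords. -/
def GoodWord (w : List (Fin 7)) : Prop :=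
  List.Chain' (fun a b => (a, b) ∉ badPairs) w

theorem List.chain'_cons {α : Type*} {R : α → α → Prop} {x y : α} {l : List α} :
    List.Chain' R (x :: y :: l) ↔ R x y ∧ List.Chain' R (y :: l) :=
  List.isChain_cons_cons

theorem List.chain'_cons' {α : Type*} {R : α → α → Prop} {x : α} {l : List α} :
    List.Chain' R (x :: l) ↔ (∀ y ∈ List.head? l, R x y) ∧ List.Chain' R l :=
  List.isChain_cons


/-! ### Rewriting system -/

/-- Replacement terms for each bad pair, derived from the relations. -/
def rwL : Fin 7 × Fin 7 → List (ℤ × Fin 7 × Fin 7) := fun p =>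
  if p = (6, 5) then [(1, 1, 2), (-1, 2, 1), (1, 3, 4), (-1, 4, 3), (1, 5, 6)]
  else if p = (6, 4) then [(1, 0, 2), (-1, 2, 0), (-1, 3, 5), (1, 4, 6), (1, 5, 3)]
  else if p = (6, 3) then [(-1, 0, 1), (1, 1, 0), (1, 3, 6), (1, 4, 5), (-1, 5, 4)]
  else if p = (6, 2) then [(-1, 0, 4), (-1, 1, 5), (1, 2, 6), (1, 4, 0), (1, 5, 1)]
  else if p = (6, 1) then [(1, 0, 3), (1, 1, 6), (1, 2, 5), (-1, 3, 0), (-1, 5, 2)]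
  else if p = (6, 0) then [(1, 0, 6), (-1, 1, 3), (1, 2, 4), (1, 3, 1), (-1, 4, 2)]
  else if p = (5, 0) then [(1, 0, 5), (-1, 1, 4), (-1, 2, 3), (1, 3, 2), (1, 4, 1)]
  else []

def coef (a b : Fin 7) (s : Fin 5) : ℤ := ((rwL (a, b)).getD s.val (0, 0, 0)).1

def rep (a b : Fin 7) (s : Fin 5) : Fin 7 × Fin 7 := ((rwL (a, b)).getD s.val (0, 0, 0)).2

/-- Lexicographic order on pairs used for termination. -/
def PairLt (p q : Fin 7 × Fin 7) : Prop := p.1 < q.1 ∨ (p.1 = q.1 ∧ p.2 < q.2)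

instance (p q : Fin 7 × Fin 7) : Decidable (PairLt p q) :=
  inferInstanceAs (Decidable (_ ∨ _))

lemma rep_lt : ∀ a b : Fin 7, (a, b) ∈ badPairs → ∀ s : Fin 5,
    PairLt (rep a b s) (a, b) := by decide

/-- Leftmost bad-pair splitting. -/
def splitBad : List (Fin 7) → Option (List (Fin 7) × Fin 7 × Fin 7 × List (Fin 7))
  | [] => none
  | [_] => none
  | a :: b :: t =>
    if (a, b) ∈ badPairs then some ([], a, b, t)
    else match splitBad (b :: t) with
      | none => none
      | some (u, x, y, v) => some (a :: u, x, y, v)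

/-- The termination measure. -/
def mu (w : List (Fin 7)) : ℕ := w.foldl (fun a d => 8 * a + (d.val + 1)) 0

lemma muF_lt {a b : ℕ} : ∀ {s t : List (Fin 7)}, a < b → s.length = t.length →
    s.foldl (fun a d => 8 * a + (d.val + 1)) a < t.foldl (fun a d => 8 * a + (d.val + 1)) b := by
  intro s
  induction s generalizing a b with
  | nil => intro t hab ht; cases t with
    | nil => simpa using hab
    | cons x xs => simp at ht
  | cons d s ih =>
    intro t hab ht
    cases t with
    | nil => simp at ht
    | cons e t' =>
      simp only [List.foldl_cons]
      apply ih
      · have h1 : d.val + 1 ≤ 7 := d.isLt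
        have h2 : 8 * a + (d.val + 1) ≤ 8 * a + 7 := by omega
        omega
      · simpa using ht

lemma mu_lt_mu (u v v' : List (Fin 7)) (a b m n : Fin 7)
    (h : PairLt (m, n) (a, b)) (hlen : v'.length = v.length) :
    mu (u ++ m :: n :: v') < mu (u ++ a :: b :: v) := by
  unfold mu
  rw [List.foldl_append, List.foldl_append]
  simp only [List.foldl_cons]
  rcases h with h | ⟨h1, h2⟩
  · have hm : (m : ℕ) < (a : ℕ) := h
    have hn : (n : ℕ) < 7 := n.isLt
    have hb : (b : ℕ) < 7 := b.isLt
    exact muF_lt (by omega) hlen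
  · have hm : m = a := h1
    subst hm
    have hn : (n : ℕ) < (b : ℕ) := h2
    exact muF_lt (by omega) hlen

lemma splitBad_none : ∀ {w : List (Fin 7)}, splitBad w = none ↔ GoodWord w := by
  intro w
  induction w with
  | nil => simp [splitBad, GoodWord, List.Chain']
  | cons a t ih =>
    cases t with
    | nil => simp [splitBad, GoodWord, List.Chain']
    | cons b t' =>
      rw [splitBad]
      by_cases hb : (a, b) ∈ badPairs
      · simp only [if_pos hb]
        constructor
        · intro h; exact absurd h (by simp)
        · intro h
          exact absurd ((List.chain'_cons.mp h).1 hb) (by simp)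
      · simp only [if_neg hb]
        rw [GoodWord, List.chain'_cons, ← GoodWord, ← ih]
        cases h : splitBad (b :: t') with
        | none => simp [hb]
        | some p => obtain ⟨u, x, y, v⟩ := p; simp

lemma splitBad_some_spec : ∀ {w u : List (Fin 7)} {a b : Fin 7} {v : List (Fin 7)},
    splitBad w = some (u, a, b, v) →
    w = u ++ a :: b :: v ∧ (a, b) ∈ badPairs ∧ GoodWord (u ++ [a]) := by
  intro w
  induction w with
  | nil => intro u a b v h; simp [splitBad] at h
  | cons c t ih =>
    intro u a b v h
    cases t with
    | nil => simp [splitBad] at h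
    | cons d t' =>
      rw [splitBad] at h
      by_cases hb : (c, d) ∈ badPairs
      · rw [if_pos hb] at h
        simp only [Option.some.injEq, Prod.mk.injEq] at h
        obtain ⟨rfl, rfl, rfl, rfl⟩ := h
        exact ⟨rfl, hb, by simp [GoodWord, List.Chain']⟩
      · rw [if_neg hb] at h
        cases hs : splitBad (d :: t') with
        | none => rw [hs] at h; simp at h
        | some p =>
          obtain ⟨u', x, y, v'⟩ := p
          rw [hs] at h
          simp only [Option.some.injEq, Prod.mk.injEq] at h
          obtain ⟨rfl, rfl, rfl, rfl⟩ := h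
          obtain ⟨hw, hbad, hgood⟩ := ih hs
          refine ⟨by rw [List.cons_append, ← hw], hbad, ?_⟩
          rw [List.cons_append, GoodWord, List.chain'_cons']
          refine ⟨?_, hgood⟩
          intro z hz
          have hz' : z = d := by
            have h9 : (u' ++ [x]).head? = some d := by
              cases u' with
              | nil =>
                have h8 : d = x := by simpa using congrArg List.head? hw
                simp [h8]
              | cons e u'' =>
                have h8 : d = e := by simpa using congrArg List.head? hw
                simp [h8]
            rw [h9] at hz; simpa using hz.symm
          rwa [hz']

lemma splitBad_eq_some {u : List (Fin 7)} {a b : Fin 7} {v : List (Fin 7)}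
    (hg : GoodWord (u ++ [a])) (hb : (a, b) ∈ badPairs) :
    splitBad (u ++ a :: b :: v) = some (u, a, b, v) := by
  induction u with
  | nil => rw [List.nil_append, splitBad, if_pos hb]
  | cons c u' ih =>
    have hg' : GoodWord (u' ++ [a]) := (List.chain'_cons'.mp hg).2
    have hcd : ∀ d, (u' ++ [a]).head? = some d → (c, d) ∉ badPairs := by
      intro d hd
      exact (List.chain'_cons'.mp hg).1 d hd
    rw [List.cons_append]
    have hne : ∃ d t', u' ++ a :: b :: v = d :: t' ∧ (u' ++ [a]).head? = some d := by
      cases u' with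
      | nil => exact ⟨a, b :: v, rfl, rfl⟩
      | cons e u'' => exact ⟨e, u'' ++ a :: b :: v, rfl, rfl⟩
    obtain ⟨d, t', ht, hd⟩ := hne
    rw [ht, splitBad, if_neg (hcd d hd), ← ht, ih hg']

/-- The normal-form (reduction) map into the free module on all words. -/
noncomputable def red (k : Type*) [Field k] (w : List (Fin 7)) : List (Fin 7) →₀ k :=
  match h : splitBad w with
  | none => Finsupp.single w 1
  | some (u, a, b, v) =>
    ∑ s : Fin 5, coef a b s • red k (u ++ (rep a b s).1 :: (rep a b s).2 :: v)
termination_by mu w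
decreasing_by
  obtain ⟨hw, hbad, -⟩ := splitBad_some_spec h
  rw [hw]
  exact mu_lt_mu u v v _ _ _ _ (rep_lt a b hbad s) rfl

lemma red_good {k : Type*} [Field k] {w : List (Fin 7)} (h : GoodWord w) :
    red k w = Finsupp.single w 1 := by
  rw [red, splitBad_none.mpr h]

lemma red_bad {k : Type*} [Field k] {w u : List (Fin 7)} {a b : Fin 7} {v : List (Fin 7)}
    (h : splitBad w = some (u, a, b, v)) :
    red k w = ∑ s : Fin 5, coef a b s • red k (u ++ (rep a b s).1 :: (rep a b s).2 :: v) := by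
  rw [red, h]

lemma rwExpand_65 {M : Type*} [AddCommGroup M] (f : Fin 7 → Fin 7 → M) :
    (∑ s : Fin 5, coef 6 5 s • f (rep 6 5 s).1 (rep 6 5 s).2) = f 1 2 - f 2 1 + f 3 4 - f 4 3 + f 5 6 := by
  rw [Fin.sum_univ_five]
  simp only [show coef 6 5 0 = 1 from by decide, show (rep 6 5 0).1 = 1 from by decide, show (rep 6 5 0).2 = 2 from by decide, show coef 6 5 1 = -1 from by decide, show (rep 6 5 1).1 = 2 from by decide, show (rep 6 5 1).2 = 1 from by decide, show coef 6 5 2 = 1 from by decide, show (rep 6 5 2).1 = 3 from by decide, show (rep 6 5 2).2 = 4 from by decide, show coef 6 5 3 = -1 from by decide, show (rep 6 5 3).1 = 4 from by decide, show (rep 6 5 3).2 = 3 from by decide, show coef 6 5 4 = 1 from by decide, show (rep 6 5 4).1 = 5 from by decide, show (rep 6 5 4).2 = 6 from by decide]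
  simp only [one_smul, neg_smul]
  abel

lemma rwExpand_64 {M : Type*} [AddCommGroup M] (f : Fin 7 → Fin 7 → M) :
    (∑ s : Fin 5, coef 6 4 s • f (rep 6 4 s).1 (rep 6 4 s).2) = f 0 2 - f 2 0 - f 3 5 + f 4 6 + f 5 3 := by
  rw [Fin.sum_univ_five]
  simp only [show coef 6 4 0 = 1 from by decide, show (rep 6 4 0).1 = 0 from by decide, show (rep 6 4 0).2 = 2 from by decide, show coef 6 4 1 = -1 from by decide, show (rep 6 4 1).1 = 2 from by decide, show (rep 6 4 1).2 = 0 from by decide, show coef 6 4 2 = -1 from by decide, show (rep 6 4 2).1 = 3 from by decide, show (rep 6 4 2).2 = 5 from by decide, show coef 6 4 3 = 1 from by decide, show (rep 6 4 3).1 = 4 from by decide, show (rep 6 4 3).2 = 6 from by decide, show coef 6 4 4 = 1 from by decide, show (rep 6 4 4).1 = 5 from by decide, show (rep 6 4 4).2 = 3 from by decide]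
  simp only [one_smul, neg_smul]
  abel

lemma rwExpand_63 {M : Type*} [AddCommGroup M] (f : Fin 7 → Fin 7 → M) :
    (∑ s : Fin 5, coef 6 3 s • f (rep 6 3 s).1 (rep 6 3 s).2) = -f 0 1 + f 1 0 + f 3 6 + f 4 5 - f 5 4 := by
  rw [Fin.sum_univ_five]
  simp only [show coef 6 3 0 = -1 from by decide, show (rep 6 3 0).1 = 0 from by decide, show (rep 6 3 0).2 = 1 from by decide, show coef 6 3 1 = 1 from by decide, show (rep 6 3 1).1 = 1 from by decide, show (rep 6 3 1).2 = 0 from by decide, show coef 6 3 2 = 1 from by decide, show (rep 6 3 2).1 = 3 from by decide, show (rep 6 3 2).2 = 6 from by decide, show coef 6 3 3 = 1 from by decide, show (rep 6 3 3).1 = 4 from by decide, show (rep 6 3 3).2 = 5 from by decide, show coef 6 3 4 = -1 from by decide, show (rep 6 3 4).1 = 5 from by decide, show (rep 6 3 4).2 = 4 from by decide]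
  simp only [one_smul, neg_smul]
  abel

lemma rwExpand_62 {M : Type*} [AddCommGroup M] (f : Fin 7 → Fin 7 → M) :
    (∑ s : Fin 5, coef 6 2 s • f (rep 6 2 s).1 (rep 6 2 s).2) = -f 0 4 - f 1 5 + f 2 6 + f 4 0 + f 5 1 := by
  rw [Fin.sum_univ_five]
  simp only [show coef 6 2 0 = -1 from by decide, show (rep 6 2 0).1 = 0 from by decide, show (rep 6 2 0).2 = 4 from by decide, show coef 6 2 1 = -1 from by decide, show (rep 6 2 1).1 = 1 from by decide, show (rep 6 2 1).2 = 5 from by decide, show coef 6 2 2 = 1 from by decide, show (rep 6 2 2).1 = 2 from by decide, show (rep 6 2 2).2 = 6 from by decide, show coef 6 2 3 = 1 from by decide, show (rep 6 2 3).1 = 4 from by decide, show (rep 6 2 3).2 = 0 from by decide, show coef 6 2 4 = 1 from by decide, show (rep 6 2 4).1 = 5 from by decide, show (rep 6 2 4).2 = 1 from by decide]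
  simp only [one_smul, neg_smul]
  abel

lemma rwExpand_61 {M : Type*} [AddCommGroup M] (f : Fin 7 → Fin 7 → M) :
    (∑ s : Fin 5, coef 6 1 s • f (rep 6 1 s).1 (rep 6 1 s).2) = f 0 3 + f 1 6 + f 2 5 - f 3 0 - f 5 2 := by
  rw [Fin.sum_univ_five]
  simp only [show coef 6 1 0 = 1 from by decide, show (rep 6 1 0).1 = 0 from by decide, show (rep 6 1 0).2 = 3 from by decide, show coef 6 1 1 = 1 from by decide, show (rep 6 1 1).1 = 1 from by decide, show (rep 6 1 1).2 = 6 from by decide, show coef 6 1 2 = 1 from by decide, show (rep 6 1 2).1 = 2 from by decide, show (rep 6 1 2).2 = 5 from by decide, show coef 6 1 3 = -1 from by decide, show (rep 6 1 3).1 = 3 from by decide, show (rep 6 1 3).2 = 0 from by decide, show coef 6 1 4 = -1 from by decide, show (rep 6 1 4).1 = 5 from by decide, show (rep 6 1 4).2 = 2 from by decide]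
  simp only [one_smul, neg_smul]
  abel

lemma rwExpand_60 {M : Type*} [AddCommGroup M] (f : Fin 7 → Fin 7 → M) :
    (∑ s : Fin 5, coef 6 0 s • f (rep 6 0 s).1 (rep 6 0 s).2) = f 0 6 - f 1 3 + f 2 4 + f 3 1 - f 4 2 := by
  rw [Fin.sum_univ_five]
  simp only [show coef 6 0 0 = 1 from by decide, show (rep 6 0 0).1 = 0 from by decide, show (rep 6 0 0).2 = 6 from by decide, show coef 6 0 1 = -1 from by decide, show (rep 6 0 1).1 = 1 from by decide, show (rep 6 0 1).2 = 3 from by decide, show coef 6 0 2 = 1 from by decide, show (rep 6 0 2).1 = 2 from by decide, show (rep 6 0 2).2 = 4 from by decide, show coef 6 0 3 = 1 from by decide, show (rep 6 0 3).1 = 3 from by decide, show (rep 6 0 3).2 = 1 from by decide, show coef 6 0 4 = -1 from by decide, show (rep 6 0 4).1 = 4 from by decide, show (rep 6 0 4).2 = 2 from by decide]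
  simp only [one_smul, neg_smul]
  abel

lemma rwExpand_50 {M : Type*} [AddCommGroup M] (f : Fin 7 → Fin 7 → M) :
    (∑ s : Fin 5, coef 5 0 s • f (rep 5 0 s).1 (rep 5 0 s).2) = f 0 5 - f 1 4 - f 2 3 + f 3 2 + f 4 1 := by
  rw [Fin.sum_univ_five]
  simp only [show coef 5 0 0 = 1 from by decide, show (rep 5 0 0).1 = 0 from by decide, show (rep 5 0 0).2 = 5 from by decide, show coef 5 0 1 = -1 from by decide, show (rep 5 0 1).1 = 1 from by decide, show (rep 5 0 1).2 = 4 from by decide, show coef 5 0 2 = -1 from by decide, show (rep 5 0 2).1 = 2 from by decide, show (rep 5 0 2).2 = 3 from by decide, show coef 5 0 3 = 1 from by decide, show (rep 5 0 3).1 = 3 from by decide, show (rep 5 0 3).2 = 2 from by decide, show coef 5 0 4 = 1 from by decide, show (rep 5 0 4).1 = 4 from by decide, show (rep 5 0 4).2 = 1 from by decide]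
  simp only [one_smul, neg_smul]
  abel

lemma epsExpand_0 {M : Type*} [AddCommGroup M] (g : Fin 7 → Fin 7 → M) :
    (∑ m : Fin 7, ∑ n : Fin 7, eps 0 m n • g m n) = g 1 2 - g 2 1 + g 3 4 - g 4 3 + g 5 6 - g 6 5 := by
  simp only [Fin.sum_univ_seven]
  simp only [show eps 0 0 0 = 0 from by decide, show eps 0 0 1 = 0 from by decide, show eps 0 0 2 = 0 from by decide, show eps 0 0 3 = 0 from by decide, show eps 0 0 4 = 0 from by decide, show eps 0 0 5 = 0 from by decide, show eps 0 0 6 = 0 from by decide, show eps 0 1 0 = 0 from by decide, show eps 0 1 1 = 0 from by decide, show eps 0 1 2 = 1 from by decide, show eps 0 1 3 = 0 from by decide, show eps 0 1 4 = 0 from by decide, show eps 0 1 5 = 0 from by decide, show eps 0 1 6 = 0 from by decide, show eps 0 2 0 = 0 from by decide, show eps 0 2 1 = -1 from by decide, show eps 0 2 2 = 0 from by decide, show eps 0 2 3 = 0 from by decide, show eps 0 2 4 = 0 from by decide, show eps 0 2 5 = 0 from by decide, show eps 0 2 6 = 0 from by decide, show eps 0 3 0 = 0 from by decide, show eps 0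 3 1 = 0 from by decide, show eps 0 3 2 = 0 from by decide, show eps 0 3 3 = 0 from by decide, show eps 0 3 4 = 1 from by decide, show eps 0 3 5 = 0 from by decide, show eps 0 3 6 = 0 from by decide, show eps 0 4 0 = 0 from by decide, show eps 0 4 1 = 0 from by decide, show eps 0 4 2 = 0 from by decide, show eps 0 4 3 = -1 from by decide, show eps 0 4 4 = 0 from by decide, show eps 0 4 5 = 0 from by decide, show eps 0 4 6 = 0 from by decide, show eps 0 5 0 = 0 from by decide, show eps 0 5 1 = 0 from by decide, show eps 0 5 2 = 0 from by decide, show eps 0 5 3 = 0 from by decide, show eps 0 5 4 = 0 from by decide, show eps 0 5 5 = 0 from by decide, show eps 0 5 6 = 1 from by decide, show eps 0 6 0 = 0 from by decide, show eps 0 6 1 = 0 from by decide, show eps 0 6 2 = 0 from by decide, show eps 0 6 3 = 0 from by decide, show eps 0 6 4 = 0 from by decide, show eps 0 6 5 = -1 from by decide, show eps 0 6 6 = 0 from by decide]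
  simp only [one_smul, neg_smul, zero_smul, add_zero, zero_add]
  abel

lemma epsExpand_1 {M : Type*} [AddCommGroup M] (g : Fin 7 → Fin 7 → M) :
    (∑ m : Fin 7, ∑ n : Fin 7, eps 1 m n • g m n) = -g 0 2 + g 2 0 + g 3 5 - g 4 6 - g 5 3 + g 6 4 := by
  simp only [Fin.sum_univ_seven]
  simp only [show eps 1 0 0 = 0 from by decide, show eps 1 0 1 = 0 from by decide, show eps 1 0 2 = -1 from by decide, show eps 1 0 3 = 0 from by decide, show eps 1 0 4 = 0 from by decide, show eps 1 0 5 = 0 from by decide, show eps 1 0 6 = 0 from by decide, show eps 1 1 0 = 0 from by decide, show eps 1 1 1 = 0 from by decide, show eps 1 1 2 = 0 from by decide, show eps 1 1 3 = 0 from by decide, show eps 1 1 4 = 0 from by decide, show eps 1 1 5 = 0 from by decide, show eps 1 1 6 = 0 from by decide, show eps 1 2 0 = 1 from by decide, show eps 1 2 1 = 0 from by decide, show eps 1 2 2 = 0 from by decide, show eps 1 2 3 = 0 from by decide, show eps 1 2 4 = 0 from by decide, show eps 1 2 5 = 0 from by decide, show eps 1 2 6 = 0 from by decide, show eps 1 3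 0 = 0 from by decide, show eps 1 3 1 = 0 from by decide, show eps 1 3 2 = 0 from by decide, show eps 1 3 3 = 0 from by decide, show eps 1 3 4 = 0 from by decide, show eps 1 3 5 = 1 from by decide, show eps 1 3 6 = 0 from by decide, show eps 1 4 0 = 0 from by decide, show eps 1 4 1 = 0 from by decide, show eps 1 4 2 = 0 from by decide, show eps 1 4 3 = 0 from by decide, show eps 1 4 4 = 0 from by decide, show eps 1 4 5 = 0 from by decide, show eps 1 4 6 = -1 from by decide, show eps 1 5 0 = 0 from by decide, show eps 1 5 1 = 0 from by decide, show eps 1 5 2 = 0 from by decide, show eps 1 5 3 = -1 from by decide, show eps 1 5 4 = 0 from by decide, show eps 1 5 5 = 0 from by decide, show eps 1 5 6 = 0 from by decide, show eps 1 6 0 = 0 from by decide, show eps 1 6 1 = 0 from by decide, show eps 1 6 2 = 0 from by decide, show eps 1 6 3 = 0 from by decide, show eps 1 6 4 = 1 from by decide, show eps 1 6 5 = 0 from by decide, show eps 1 6 6 = 0 from by decide]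
  simp only [one_smul, neg_smul, zero_smul, add_zero, zero_add]
  abel

lemma epsExpand_2 {M : Type*} [AddCommGroup M] (g : Fin 7 → Fin 7 → M) :
    (∑ m : Fin 7, ∑ n : Fin 7, eps 2 m n • g m n) = g 0 1 - g 1 0 - g 3 6 - g 4 5 + g 5 4 + g 6 3 := by
  simp only [Fin.sum_univ_seven]
  simp only [show eps 2 0 0 = 0 from by decide, show eps 2 0 1 = 1 from by decide, show eps 2 0 2 = 0 from by decide, show eps 2 0 3 = 0 from by decide, show eps 2 0 4 = 0 from by decide, show eps 2 0 5 = 0 from by decide, show eps 2 0 6 = 0 from by decide, show eps 2 1 0 = -1 from by decide, show eps 2 1 1 = 0 from by decide, show eps 2 1 2 = 0 from by decide, show eps 2 1 3 = 0 from by decide, show eps 2 1 4 = 0 from by decide, show eps 2 1 5 = 0 from by decide, show eps 2 1 6 = 0 from by decide, show eps 2 2 0 = 0 from by decide, show eps 2 2 1 = 0 from by decide, show eps 2 2 2 = 0 from by decide, show eps 2 2 3 = 0 from by decide, show eps 2 2 4 = 0 from by decide, show eps 2 2 5 = 0 from by decide, show eps 2 2 6 = 0 from by decide, show eps 2 3 0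 = 0 from by decide, show eps 2 3 1 = 0 from by decide, show eps 2 3 2 = 0 from by decide, show eps 2 3 3 = 0 from by decide, show eps 2 3 4 = 0 from by decide, show eps 2 3 5 = 0 from by decide, show eps 2 3 6 = -1 from by decide, show eps 2 4 0 = 0 from by decide, show eps 2 4 1 = 0 from by decide, show eps 2 4 2 = 0 from by decide, show eps 2 4 3 = 0 from by decide, show eps 2 4 4 = 0 from by decide, show eps 2 4 5 = -1 from by decide, show eps 2 4 6 = 0 from by decide, show eps 2 5 0 = 0 from by decide, show eps 2 5 1 = 0 from by decide, show eps 2 5 2 = 0 from by decide, show eps 2 5 3 = 0 from by decide, show eps 2 5 4 = 1 from by decide, show eps 2 5 5 = 0 from by decide, show eps 2 5 6 = 0 from by decide, show eps 2 6 0 = 0 from by decide, show eps 2 6 1 = 0 from by decide, show eps 2 6 2 = 0 from by decide, show eps 2 6 3 = 1 from by decide, show eps 2 6 4 = 0 from by decide, show eps 2 6 5 = 0 from by decide, show eps 2 6 6 = 0 from by decide]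
  simp only [one_smul, neg_smul, zero_smul, add_zero, zero_add]
  abel

lemma epsExpand_3 {M : Type*} [AddCommGroup M] (g : Fin 7 → Fin 7 → M) :
    (∑ m : Fin 7, ∑ n : Fin 7, eps 3 m n • g m n) = -g 0 4 - g 1 5 + g 2 6 + g 4 0 + g 5 1 - g 6 2 := by
  simp only [Fin.sum_univ_seven]
  simp only [show eps 3 0 0 = 0 from by decide, show eps 3 0 1 = 0 from by decide, show eps 3 0 2 = 0 from by decide, show eps 3 0 3 = 0 from by decide, show eps 3 0 4 = -1 from by decide, show eps 3 0 5 = 0 from by decide, show eps 3 0 6 = 0 from by decide, show eps 3 1 0 = 0 from by decide, show eps 3 1 1 = 0 from by decide, show eps 3 1 2 = 0 from by decide, show eps 3 1 3 = 0 from by decide, show eps 3 1 4 = 0 from by decide, show eps 3 1 5 = -1 from by decide, show eps 3 1 6 = 0 from by decide, show eps 3 2 0 = 0 from by decide, show eps 3 2 1 = 0 from by decide, show eps 3 2 2 = 0 from by decide, show eps 3 2 3 = 0 from by decide, show eps 3 2 4 = 0 from by decide, show eps 3 2 5 = 0 from by decide, show eps 3 2 6 = 1 from by decide, show eps 3 3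 0 = 0 from by decide, show eps 3 3 1 = 0 from by decide, show eps 3 3 2 = 0 from by decide, show eps 3 3 3 = 0 from by decide, show eps 3 3 4 = 0 from by decide, show eps 3 3 5 = 0 from by decide, show eps 3 3 6 = 0 from by decide, show eps 3 4 0 = 1 from by decide, show eps 3 4 1 = 0 from by decide, show eps 3 4 2 = 0 from by decide, show eps 3 4 3 = 0 from by decide, show eps 3 4 4 = 0 from by decide, show eps 3 4 5 = 0 from by decide, show eps 3 4 6 = 0 from by decide, show eps 3 5 0 = 0 from by decide, show eps 3 5 1 = 1 from by decide, show eps 3 5 2 = 0 from by decide, show eps 3 5 3 = 0 from by decide, show eps 3 5 4 = 0 from by decide, show eps 3 5 5 = 0 from by decide, show eps 3 5 6 = 0 from by decide, show eps 3 6 0 = 0 from by decide, show eps 3 6 1 = 0 from by decide, show eps 3 6 2 = -1 from by decide, show eps 3 6 3 = 0 from by decide, show eps 3 6 4 = 0 from by decide, show eps 3 6 5 = 0 from by decide, show eps 3 6 6 = 0 from by decide]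
  simp only [one_smul, neg_smul, zero_smul, add_zero, zero_add]
  abel

lemma epsExpand_4 {M : Type*} [AddCommGroup M] (g : Fin 7 → Fin 7 → M) :
    (∑ m : Fin 7, ∑ n : Fin 7, eps 4 m n • g m n) = g 0 3 + g 1 6 + g 2 5 - g 3 0 - g 5 2 - g 6 1 := by
  simp only [Fin.sum_univ_seven]
  simp only [show eps 4 0 0 = 0 from by decide, show eps 4 0 1 = 0 from by decide, show eps 4 0 2 = 0 from by decide, show eps 4 0 3 = 1 from by decide, show eps 4 0 4 = 0 from by decide, show eps 4 0 5 = 0 from by decide, show eps 4 0 6 = 0 from by decide, show eps 4 1 0 = 0 from by decide, show eps 4 1 1 = 0 from by decide, show eps 4 1 2 = 0 from by decide, show eps 4 1 3 = 0 from by decide, show eps 4 1 4 = 0 from by decide, show eps 4 1 5 = 0 from by decide, show eps 4 1 6 = 1 from by decide, show eps 4 2 0 = 0 from by decide, show eps 4 2 1 = 0 from by decide, show eps 4 2 2 = 0 from by decide, show eps 4 2 3 = 0 from by decide, show eps 4 2 4 = 0 from by decide, show eps 4 2 5 = 1 from by decide, show eps 4 2 6 = 0 from by decide, show eps 4 3 0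 = -1 from by decide, show eps 4 3 1 = 0 from by decide, show eps 4 3 2 = 0 from by decide, show eps 4 3 3 = 0 from by decide, show eps 4 3 4 = 0 from by decide, show eps 4 3 5 = 0 from by decide, show eps 4 3 6 = 0 from by decide, show eps 4 4 0 = 0 from by decide, show eps 4 4 1 = 0 from by decide, show eps 4 4 2 = 0 from by decide, show eps 4 4 3 = 0 from by decide, show eps 4 4 4 = 0 from by decide, show eps 4 4 5 = 0 from by decide, show eps 4 4 6 = 0 from by decide, show eps 4 5 0 = 0 from by decide, show eps 4 5 1 = 0 from by decide, show eps 4 5 2 = -1 from by decide, show eps 4 5 3 = 0 from by decide, show eps 4 5 4 = 0 from by decide, show eps 4 5 5 = 0 from by decide, show eps 4 5 6 = 0 from by decide, show eps 4 6 0 = 0 from by decide, show eps 4 6 1 = -1 from by decide, show eps 4 6 2 = 0 from by decide, show eps 4 6 3 = 0 from by decide, show eps 4 6 4 = 0 from by decide, show eps 4 6 5 = 0 from by decide, show eps 4 6 6 = 0 from by decide]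
  simp only [one_smul, neg_smul, zero_smul, add_zero, zero_add]
  abel

lemma epsExpand_5 {M : Type*} [AddCommGroup M] (g : Fin 7 → Fin 7 → M) :
    (∑ m : Fin 7, ∑ n : Fin 7, eps 5 m n • g m n) = -g 0 6 + g 1 3 - g 2 4 - g 3 1 + g 4 2 + g 6 0 := by
  simp only [Fin.sum_univ_seven]
  simp only [show eps 5 0 0 = 0 from by decide, show eps 5 0 1 = 0 from by decide, show eps 5 0 2 = 0 from by decide, show eps 5 0 3 = 0 from by decide, show eps 5 0 4 = 0 from by decide, show eps 5 0 5 = 0 from by decide, show eps 5 0 6 = -1 from by decide, show eps 5 1 0 = 0 from by decide, show eps 5 1 1 = 0 from by decide, show eps 5 1 2 = 0 from by decide, show eps 5 1 3 = 1 from by decide, show eps 5 1 4 = 0 from by decide, show eps 5 1 5 = 0 from by decide, show eps 5 1 6 = 0 from by decide, show eps 5 2 0 = 0 from by decide, show eps 5 2 1 = 0 from by decide, show eps 5 2 2 = 0 from by decide, show eps 5 2 3 = 0 from by decide, show eps 5 2 4 = -1 from by decide, show eps 5 2 5 = 0 from by decide, show eps 5 2 6 = 0 from by decide, show eps 5 3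 0 = 0 from by decide, show eps 5 3 1 = -1 from by decide, show eps 5 3 2 = 0 from by decide, show eps 5 3 3 = 0 from by decide, show eps 5 3 4 = 0 from by decide, show eps 5 3 5 = 0 from by decide, show eps 5 3 6 = 0 from by decide, show eps 5 4 0 = 0 from by decide, show eps 5 4 1 = 0 from by decide, show eps 5 4 2 = 1 from by decide, show eps 5 4 3 = 0 from by decide, show eps 5 4 4 = 0 from by decide, show eps 5 4 5 = 0 from by decide, show eps 5 4 6 = 0 from by decide, show eps 5 5 0 = 0 from by decide, show eps 5 5 1 = 0 from by decide, show eps 5 5 2 = 0 from by decide, show eps 5 5 3 = 0 from by decide, show eps 5 5 4 = 0 from by decide, show eps 5 5 5 = 0 from by decide, show eps 5 5 6 = 0 from by decide, show eps 5 6 0 = 1 from by decide, show eps 5 6 1 = 0 from by decide, show eps 5 6 2 = 0 from by decide, show eps 5 6 3 = 0 from by decide, show eps 5 6 4 = 0 from by decide, show eps 5 6 5 = 0 from by decide, show eps 5 6 6 = 0 from by decide]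
  simp only [one_smul, neg_smul, zero_smul, add_zero, zero_add]
  abel

lemma epsExpand_6 {M : Type*} [AddCommGroup M] (g : Fin 7 → Fin 7 → M) :
    (∑ m : Fin 7, ∑ n : Fin 7, eps 6 m n • g m n) = g 0 5 - g 1 4 - g 2 3 + g 3 2 + g 4 1 - g 5 0 := by
  simp only [Fin.sum_univ_seven]
  simp only [show eps 6 0 0 = 0 from by decide, show eps 6 0 1 = 0 from by decide, show eps 6 0 2 = 0 from by decide, show eps 6 0 3 = 0 from by decide, show eps 6 0 4 = 0 from by decide, show eps 6 0 5 = 1 from by decide, show eps 6 0 6 = 0 from by decide, show eps 6 1 0 = 0 from by decide, show eps 6 1 1 = 0 from by decide, show eps 6 1 2 = 0 from by decide, show eps 6 1 3 = 0 from by decide, show eps 6 1 4 = -1 from by decide, show eps 6 1 5 = 0 from by decide, show eps 6 1 6 = 0 from by decide, show eps 6 2 0 = 0 from by decide, show eps 6 2 1 = 0 from by decide, show eps 6 2 2 = 0 from by decide, show eps 6 2 3 = -1 from by decide, show eps 6 2 4 = 0 from by decide, show eps 6 2 5 = 0 from by decide, show eps 6 2 6 = 0 from by decide, show eps 6 3 0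 = 0 from by decide, show eps 6 3 1 = 0 from by decide, show eps 6 3 2 = 1 from by decide, show eps 6 3 3 = 0 from by decide, show eps 6 3 4 = 0 from by decide, show eps 6 3 5 = 0 from by decide, show eps 6 3 6 = 0 from by decide, show eps 6 4 0 = 0 from by decide, show eps 6 4 1 = 1 from by decide, show eps 6 4 2 = 0 from by decide, show eps 6 4 3 = 0 from by decide, show eps 6 4 4 = 0 from by decide, show eps 6 4 5 = 0 from by decide, show eps 6 4 6 = 0 from by decide, show eps 6 5 0 = -1 from by decide, show eps 6 5 1 = 0 from by decide, show eps 6 5 2 = 0 from by decide, show eps 6 5 3 = 0 from by decide, show eps 6 5 4 = 0 from by decide, show eps 6 5 5 = 0 from by decide, show eps 6 5 6 = 0 from by decide, show eps 6 6 0 = 0 from by decide, show eps 6 6 1 = 0 from by decide, show eps 6 6 2 = 0 from by decide, show eps 6 6 3 = 0 from by decide, show eps 6 6 4 = 0 from by decide, show eps 6 6 5 = 0 from by decide, show eps 6 6 6 = 0 from by decide]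
  simp only [one_smul, neg_smul, zero_smul, add_zero, zero_add]
  abel

lemma goodWord_not_bad {u v : List (Fin 7)} {a b : Fin 7}
    (h : GoodWord (u ++ a :: b :: v)) : (a, b) ∉ badPairs :=
  (List.chain'_cons.mp (h.suffix ⟨u, rfl⟩)).1

set_option maxHeartbeats 2000000 in
theorem redB (k : Type*) [Field k] :
    ∀ (w u v : List (Fin 7)) (a b : Fin 7), w = u ++ a :: b :: v → (a, b) ∈ badPairs →
    red k w = ∑ s : Fin 5, coef a b s • red k (u ++ (rep a b s).1 :: (rep a b s).2 :: v) := by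
  suffices H : ∀ N : ℕ, ∀ (w u v : List (Fin 7)) (a b : Fin 7), mu w < N →
      w = u ++ a :: b :: v → (a, b) ∈ badPairs →
      red k w = ∑ s : Fin 5, coef a b s • red k (u ++ (rep a b s).1 :: (rep a b s).2 :: v) by
    exact fun w u v a b hw hb => H (mu w + 1) w u v a b (Nat.lt_succ_self _) hw hb
  intro N
  induction N with
  | zero => intro w u v a b h; omega
  | succ N IH =>
    intro w u v a b hmu hw hbad
    subst hw
    cases hsp : splitBad (u ++ a :: b :: v) with
    | none =>
      exact absurd (goodWord_not_bad (splitBad_none.mp hsp)) (not_not_intro hbad)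
    | some q =>
      obtain ⟨u0, a0, b0, v0⟩ := q
      obtain ⟨hw0, hbad0, hgood0⟩ := splitBad_some_spec hsp
      rcases lt_trichotomy u0.length u.length with hlt | hlen | hgt
      · -- leftmost bad pair strictly before position of (a, b)
        have hq1 : u0 ++ [a0] <+: u ++ a :: b :: v := ⟨b0 :: v0, by simp [hw0]⟩
        have hq2 : u <+: u ++ a :: b :: v := ⟨a :: b :: v, rfl⟩
        have hpu : u0 ++ [a0] <+: u :=
          List.prefix_of_prefix_length_le hq1 hq2 (by simpa using hlt)
        obtain ⟨z, hz⟩ := hpu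
        have hz' : u = u0 ++ a0 :: z := by simpa using hz.symm
        subst hz'
        have htail : b0 :: v0 = z ++ a :: b :: v := by
          have := hw0
          simp only [List.append_assoc, List.cons_append, List.append_cancel_left_eq,
            List.cons.injEq] at this
          exact this.2.symm
        cases z with
        | cons c z' =>
          -- non-overlapping rewrites commute
          simp only [List.cons_append, List.cons.injEq] at htail
          obtain ⟨rfl, rfl⟩ := htail
          have hred : red k ((u0 ++ a0 :: b0 :: z') ++ a :: b :: v)
              = ∑ s : Fin 5, coef a0 b0 s •
                red k (u0 ++ (rep a0 b0 s).1 :: (rep a0 b0 s).2 :: (z' ++ a :: b :: v)) := by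
            rw [show (u0 ++ a0 :: b0 :: z') ++ a :: b :: v
                = u0 ++ a0 :: b0 :: (z' ++ a :: b :: v) by simp]
            exact red_bad (splitBad_eq_some hgood0 hbad0)
          rw [hred]
          have hstep : ∀ s : Fin 5,
              red k (u0 ++ (rep a0 b0 s).1 :: (rep a0 b0 s).2 :: (z' ++ a :: b :: v))
              = ∑ t : Fin 5, coef a b t •
                red k (u0 ++ (rep a0 b0 s).1 :: (rep a0 b0 s).2 ::
                  (z' ++ (rep a b t).1 :: (rep a b t).2 :: v)) := by
            intro s
            have hm : mu (u0 ++ (rep a0 b0 s).1 :: (rep a0 b0 s).2 :: (z' ++ a :: b :: v))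
                < mu (u0 ++ a0 :: b0 :: (z' ++ a :: b :: v)) :=
              mu_lt_mu u0 _ _ a0 b0 _ _ (rep_lt a0 b0 hbad0 s) rfl
            have hm2 : mu (u0 ++ a0 :: b0 :: (z' ++ a :: b :: v)) < N + 1 := by
              rw [show u0 ++ a0 :: b0 :: (z' ++ a :: b :: v)
                = (u0 ++ a0 :: b0 :: z') ++ a :: b :: v by simp] ; exact hmu
            have hih := IH (u0 ++ (rep a0 b0 s).1 :: (rep a0 b0 s).2 :: (z' ++ a :: b :: v))
              (u0 ++ (rep a0 b0 s).1 :: (rep a0 b0 s).2 :: z') v a b (by omega) (by simp) hbad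
            simp only [List.cons_append, List.nil_append, List.append_assoc] at hih
            exact hih
          have hstep2 : ∀ t : Fin 5,
              red k ((u0 ++ a0 :: b0 :: z') ++ (rep a b t).1 :: (rep a b t).2 :: v)
              = ∑ s : Fin 5, coef a0 b0 s •
                red k (u0 ++ (rep a0 b0 s).1 :: (rep a0 b0 s).2 ::
                  (z' ++ (rep a b t).1 :: (rep a b t).2 :: v)) := by
            intro t
            rw [show (u0 ++ a0 :: b0 :: z') ++ (rep a b t).1 :: (rep a b t).2 :: v
                = u0 ++ a0 :: b0 :: (z' ++ (rep a b t).1 :: (rep a b t).2 :: v) by simp]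
            exact red_bad (splitBad_eq_some hgood0 hbad0)
          calc (∑ s : Fin 5, coef a0 b0 s •
                  red k (u0 ++ (rep a0 b0 s).1 :: (rep a0 b0 s).2 :: (z' ++ a :: b :: v)))
              = ∑ s : Fin 5, ∑ t : Fin 5, coef a0 b0 s • coef a b t •
                  red k (u0 ++ (rep a0 b0 s).1 :: (rep a0 b0 s).2 ::
                    (z' ++ (rep a b t).1 :: (rep a b t).2 :: v)) := by
                refine Finset.sum_congr rfl fun s _ => ?_
                rw [hstep s, Finset.smul_sum]
            _ = ∑ t : Fin 5, coef a b t •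
                  red k ((u0 ++ a0 :: b0 :: z') ++ (rep a b t).1 :: (rep a b t).2 :: v) := by
                rw [Finset.sum_comm]
                refine Finset.sum_congr rfl fun t _ => ?_
                rw [hstep2 t, Finset.smul_sum]
                refine Finset.sum_congr rfl fun s _ => ?_
                rw [smul_comm]
        | nil =>
          simp only [List.nil_append, List.cons.injEq] at htail
          obtain ⟨hb0a, hv0⟩ := htail
          subst hb0a
          subst hv0
          have tri : ∀ p q r : Fin 7, (p, q) ∈ badPairs → (q, r) ∈ badPairs →
              p = 6 ∧ q = 5 ∧ r = 0 := by decide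
          obtain ⟨h1t, h2t, h3t⟩ := tri a0 b0 b hbad0 hbad
          subst h1t; subst h2t; subst h3t
          have hmuN : mu (u0 ++ 6 :: 5 :: 0 :: v) ≤ N := by
            rw [show (u0 ++ [(6 : Fin 7)]) ++ (5 : Fin 7) :: 0 :: v
              = u0 ++ 6 :: 5 :: 0 :: v by simp] at hmu
            omega
          -- overlap case x7 x6 x1
          have hL : red k (u0 ++ 6 :: 5 :: 0 :: v) = red k (u0 ++ 1 :: 2 :: 0 :: v) - red k (u0 ++ 2 :: 1 :: 0 :: v) + red k (u0 ++ 3 :: 4 :: 0 :: v) - red k (u0 ++ 4 :: 3 :: 0 :: v) + red k (u0 ++ 5 :: 6 :: 0 :: v) := by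
            rw [red_bad (splitBad_eq_some hgood0 (by decide))]
            exact rwExpand_65 (fun m n => red k (u0 ++ m :: n :: 0 :: v))
          have hR : (∑ s : Fin 5, coef 5 0 s • red k ((u0 ++ [6]) ++ (rep 5 0 s).1 :: (rep 5 0 s).2 :: v)) = red k (u0 ++ 6 :: 0 :: 5 :: v) - red k (u0 ++ 6 :: 1 :: 4 :: v) - red k (u0 ++ 6 :: 2 :: 3 :: v) + red k (u0 ++ 6 :: 3 :: 2 :: v) + red k (u0 ++ 6 :: 4 :: 1 :: v) := by
            have e0 : (∑ s : Fin 5, coef 5 0 s • red k ((u0 ++ [6]) ++ (rep 5 0 s).1 :: (rep 5 0 s).2 :: v))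
                = ∑ s : Fin 5, coef 5 0 s • red k (u0 ++ 6 :: (rep 5 0 s).1 :: (rep 5 0 s).2 :: v) := by
              simp only [List.cons_append, List.nil_append, List.append_assoc]
            exact e0.trans (rwExpand_50 (fun m n => red k (u0 ++ 6 :: m :: n :: v)))
          have ee1 : red k (u0 ++ 5 :: 6 :: 0 :: v) = ∑ s : Fin 5, coef 6 0 s • red k (u0 ++ 5 :: (rep 6 0 s).1 :: (rep 6 0 s).2 :: v) := by
            have hih := IH (u0 ++ 5 :: 6 :: 0 :: v) (u0 ++ [5]) v 6 0
              (lt_of_lt_of_le (mu_lt_mu u0 (0 :: v) (0 :: v) 6 5 5 6 (by decide) (by simp)) hmuN) (by simp) (by decide)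
            simp only [List.cons_append, List.nil_append, List.append_assoc] at hih
            exact hih
          have g1 : red k (u0 ++ 5 :: 6 :: 0 :: v) = red k (u0 ++ 5 :: 0 :: 6 :: v) - red k (u0 ++ 5 :: 1 :: 3 :: v) + red k (u0 ++ 5 :: 2 :: 4 :: v) + red k (u0 ++ 5 :: 3 :: 1 :: v) - red k (u0 ++ 5 :: 4 :: 2 :: v) :=
            ee1.trans (rwExpand_60 (fun m n => red k (u0 ++ 5 :: m :: n :: v)))
          have ee2 : red k (u0 ++ 5 :: 0 :: 6 :: v) = ∑ s : Fin 5, coef 5 0 s • red k (u0 ++ (rep 5 0 s).1 :: (rep 5 0 s).2 :: 6 :: v) := by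
            have hih := IH (u0 ++ 5 :: 0 :: 6 :: v) u0 (6 :: v) 5 0
              (lt_of_lt_of_le (mu_lt_mu u0 (0 :: v) (6 :: v) 6 5 5 0 (by decide) (by simp)) hmuN) rfl (by decide)
            try simp only [List.cons_append, List.nil_append, List.append_assoc] at hih
            exact hih
          have g2 : red k (u0 ++ 5 :: 0 :: 6 :: v) = red k (u0 ++ 0 :: 5 :: 6 :: v) - red k (u0 ++ 1 :: 4 :: 6 :: v) - red k (u0 ++ 2 :: 3 :: 6 :: v) + red k (u0 ++ 3 :: 2 :: 6 :: v) + red k (u0 ++ 4 :: 1 :: 6 :: v) :=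
            ee2.trans (rwExpand_50 (fun m n => red k (u0 ++ m :: n :: 6 :: v)))
          have ee3 : red k (u0 ++ 6 :: 4 :: 1 :: v) = ∑ s : Fin 5, coef 6 4 s • red k (u0 ++ (rep 6 4 s).1 :: (rep 6 4 s).2 :: 1 :: v) := by
            have hih := IH (u0 ++ 6 :: 4 :: 1 :: v) u0 (1 :: v) 6 4
              (lt_of_lt_of_le (mu_lt_mu u0 (0 :: v) (1 :: v) 6 5 6 4 (by decide) (by simp)) hmuN) rfl (by decide)
            try simp only [List.cons_append, List.nil_append, List.append_assoc] at hih
            exact hih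
          have g3 : red k (u0 ++ 6 :: 4 :: 1 :: v) = red k (u0 ++ 0 :: 2 :: 1 :: v) - red k (u0 ++ 2 :: 0 :: 1 :: v) - red k (u0 ++ 3 :: 5 :: 1 :: v) + red k (u0 ++ 4 :: 6 :: 1 :: v) + red k (u0 ++ 5 :: 3 :: 1 :: v) :=
            ee3.trans (rwExpand_64 (fun m n => red k (u0 ++ m :: n :: 1 :: v)))
          have ee4 : red k (u0 ++ 6 :: 3 :: 2 :: v) = ∑ s : Fin 5, coef 6 3 s • red k (u0 ++ (rep 6 3 s).1 :: (rep 6 3 s).2 :: 2 :: v) := by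
            have hih := IH (u0 ++ 6 :: 3 :: 2 :: v) u0 (2 :: v) 6 3
              (lt_of_lt_of_le (mu_lt_mu u0 (0 :: v) (2 :: v) 6 5 6 3 (by decide) (by simp)) hmuN) rfl (by decide)
            try simp only [List.cons_append, List.nil_append, List.append_assoc] at hih
            exact hih
          have g4 : red k (u0 ++ 6 :: 3 :: 2 :: v) = -red k (u0 ++ 0 :: 1 :: 2 :: v) + red k (u0 ++ 1 :: 0 :: 2 :: v) + red k (u0 ++ 3 :: 6 :: 2 :: v) + red k (u0 ++ 4 :: 5 :: 2 :: v) - red k (u0 ++ 5 :: 4 :: 2 :: v) :=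
            ee4.trans (rwExpand_63 (fun m n => red k (u0 ++ m :: n :: 2 :: v)))
          have ee5 : red k (u0 ++ 6 :: 2 :: 3 :: v) = ∑ s : Fin 5, coef 6 2 s • red k (u0 ++ (rep 6 2 s).1 :: (rep 6 2 s).2 :: 3 :: v) := by
            have hih := IH (u0 ++ 6 :: 2 :: 3 :: v) u0 (3 :: v) 6 2
              (lt_of_lt_of_le (mu_lt_mu u0 (0 :: v) (3 :: v) 6 5 6 2 (by decide) (by simp)) hmuN) rfl (by decide)
            try simp only [List.cons_append, List.nil_append, List.append_assoc] at hih
            exact hih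
          have g5 : red k (u0 ++ 6 :: 2 :: 3 :: v) = -red k (u0 ++ 0 :: 4 :: 3 :: v) - red k (u0 ++ 1 :: 5 :: 3 :: v) + red k (u0 ++ 2 :: 6 :: 3 :: v) + red k (u0 ++ 4 :: 0 :: 3 :: v) + red k (u0 ++ 5 :: 1 :: 3 :: v) :=
            ee5.trans (rwExpand_62 (fun m n => red k (u0 ++ m :: n :: 3 :: v)))
          have ee6 : red k (u0 ++ 6 :: 1 :: 4 :: v) = ∑ s : Fin 5, coef 6 1 s • red k (u0 ++ (rep 6 1 s).1 :: (rep 6 1 s).2 :: 4 :: v) := by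
            have hih := IH (u0 ++ 6 :: 1 :: 4 :: v) u0 (4 :: v) 6 1
              (lt_of_lt_of_le (mu_lt_mu u0 (0 :: v) (4 :: v) 6 5 6 1 (by decide) (by simp)) hmuN) rfl (by decide)
            try simp only [List.cons_append, List.nil_append, List.append_assoc] at hih
            exact hih
          have g6 : red k (u0 ++ 6 :: 1 :: 4 :: v) = red k (u0 ++ 0 :: 3 :: 4 :: v) + red k (u0 ++ 1 :: 6 :: 4 :: v) + red k (u0 ++ 2 :: 5 :: 4 :: v) - red k (u0 ++ 3 :: 0 :: 4 :: v) - red k (u0 ++ 5 :: 2 :: 4 :: v) :=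
            ee6.trans (rwExpand_61 (fun m n => red k (u0 ++ m :: n :: 4 :: v)))
          have ee7 : red k (u0 ++ 6 :: 0 :: 5 :: v) = ∑ s : Fin 5, coef 6 0 s • red k (u0 ++ (rep 6 0 s).1 :: (rep 6 0 s).2 :: 5 :: v) := by
            have hih := IH (u0 ++ 6 :: 0 :: 5 :: v) u0 (5 :: v) 6 0
              (lt_of_lt_of_le (mu_lt_mu u0 (0 :: v) (5 :: v) 6 5 6 0 (by decide) (by simp)) hmuN) rfl (by decide)
            try simp only [List.cons_append, List.nil_append, List.append_assoc] at hih
            exact hih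
          have g7 : red k (u0 ++ 6 :: 0 :: 5 :: v) = red k (u0 ++ 0 :: 6 :: 5 :: v) - red k (u0 ++ 1 :: 3 :: 5 :: v) + red k (u0 ++ 2 :: 4 :: 5 :: v) + red k (u0 ++ 3 :: 1 :: 5 :: v) - red k (u0 ++ 4 :: 2 :: 5 :: v) :=
            ee7.trans (rwExpand_60 (fun m n => red k (u0 ++ m :: n :: 5 :: v)))
          have ee8 : red k (u0 ++ 4 :: 6 :: 1 :: v) = ∑ s : Fin 5, coef 6 1 s • red k (u0 ++ 4 :: (rep 6 1 s).1 :: (rep 6 1 s).2 :: v) := by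
            have hih := IH (u0 ++ 4 :: 6 :: 1 :: v) (u0 ++ [4]) v 6 1
              (lt_of_lt_of_le (mu_lt_mu u0 (0 :: v) (1 :: v) 6 5 4 6 (by decide) (by simp)) hmuN) (by simp) (by decide)
            simp only [List.cons_append, List.nil_append, List.append_assoc] at hih
            exact hih
          have g8 : red k (u0 ++ 4 :: 6 :: 1 :: v) = red k (u0 ++ 4 :: 0 :: 3 :: v) + red k (u0 ++ 4 :: 1 :: 6 :: v) + red k (u0 ++ 4 :: 2 :: 5 :: v) - red k (u0 ++ 4 :: 3 :: 0 :: v) - red k (u0 ++ 4 :: 5 :: 2 :: v) :=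
            ee8.trans (rwExpand_61 (fun m n => red k (u0 ++ 4 :: m :: n :: v)))
          have ee9 : red k (u0 ++ 3 :: 6 :: 2 :: v) = ∑ s : Fin 5, coef 6 2 s • red k (u0 ++ 3 :: (rep 6 2 s).1 :: (rep 6 2 s).2 :: v) := by
            have hih := IH (u0 ++ 3 :: 6 :: 2 :: v) (u0 ++ [3]) v 6 2
              (lt_of_lt_of_le (mu_lt_mu u0 (0 :: v) (2 :: v) 6 5 3 6 (by decide) (by simp)) hmuN) (by simp) (by decide)
            simp only [List.cons_append, List.nil_append, List.append_assoc] at hih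
            exact hih
          have g9 : red k (u0 ++ 3 :: 6 :: 2 :: v) = -red k (u0 ++ 3 :: 0 :: 4 :: v) - red k (u0 ++ 3 :: 1 :: 5 :: v) + red k (u0 ++ 3 :: 2 :: 6 :: v) + red k (u0 ++ 3 :: 4 :: 0 :: v) + red k (u0 ++ 3 :: 5 :: 1 :: v) :=
            ee9.trans (rwExpand_62 (fun m n => red k (u0 ++ 3 :: m :: n :: v)))
          have ee10 : red k (u0 ++ 2 :: 6 :: 3 :: v) = ∑ s : Fin 5, coef 6 3 s • red k (u0 ++ 2 :: (rep 6 3 s).1 :: (rep 6 3 s).2 :: v) := by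
            have hih := IH (u0 ++ 2 :: 6 :: 3 :: v) (u0 ++ [2]) v 6 3
              (lt_of_lt_of_le (mu_lt_mu u0 (0 :: v) (3 :: v) 6 5 2 6 (by decide) (by simp)) hmuN) (by simp) (by decide)
            simp only [List.cons_append, List.nil_append, List.append_assoc] at hih
            exact hih
          have g10 : red k (u0 ++ 2 :: 6 :: 3 :: v) = -red k (u0 ++ 2 :: 0 :: 1 :: v) + red k (u0 ++ 2 :: 1 :: 0 :: v) + red k (u0 ++ 2 :: 3 :: 6 :: v) + red k (u0 ++ 2 :: 4 :: 5 :: v) - red k (u0 ++ 2 :: 5 :: 4 :: v) :=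
            ee10.trans (rwExpand_63 (fun m n => red k (u0 ++ 2 :: m :: n :: v)))
          have ee11 : red k (u0 ++ 1 :: 6 :: 4 :: v) = ∑ s : Fin 5, coef 6 4 s • red k (u0 ++ 1 :: (rep 6 4 s).1 :: (rep 6 4 s).2 :: v) := by
            have hih := IH (u0 ++ 1 :: 6 :: 4 :: v) (u0 ++ [1]) v 6 4
              (lt_of_lt_of_le (mu_lt_mu u0 (0 :: v) (4 :: v) 6 5 1 6 (by decide) (by simp)) hmuN) (by simp) (by decide)
            simp only [List.cons_append, List.nil_append, List.append_assoc] at hih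
            exact hih
          have g11 : red k (u0 ++ 1 :: 6 :: 4 :: v) = red k (u0 ++ 1 :: 0 :: 2 :: v) - red k (u0 ++ 1 :: 2 :: 0 :: v) - red k (u0 ++ 1 :: 3 :: 5 :: v) + red k (u0 ++ 1 :: 4 :: 6 :: v) + red k (u0 ++ 1 :: 5 :: 3 :: v) :=
            ee11.trans (rwExpand_64 (fun m n => red k (u0 ++ 1 :: m :: n :: v)))
          have ee12 : red k (u0 ++ 0 :: 6 :: 5 :: v) = ∑ s : Fin 5, coef 6 5 s • red k (u0 ++ 0 :: (rep 6 5 s).1 :: (rep 6 5 s).2 :: v) := by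
            have hih := IH (u0 ++ 0 :: 6 :: 5 :: v) (u0 ++ [0]) v 6 5
              (lt_of_lt_of_le (mu_lt_mu u0 (0 :: v) (5 :: v) 6 5 0 6 (by decide) (by simp)) hmuN) (by simp) (by decide)
            simp only [List.cons_append, List.nil_append, List.append_assoc] at hih
            exact hih
          have g12 : red k (u0 ++ 0 :: 6 :: 5 :: v) = red k (u0 ++ 0 :: 1 :: 2 :: v) - red k (u0 ++ 0 :: 2 :: 1 :: v) + red k (u0 ++ 0 :: 3 :: 4 :: v) - red k (u0 ++ 0 :: 4 :: 3 :: v) + red k (u0 ++ 0 :: 5 :: 6 :: v) :=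
            ee12.trans (rwExpand_65 (fun m n => red k (u0 ++ 0 :: m :: n :: v)))
          have h7 : (u0 ++ [(6 : Fin 7)]) ++ 5 :: 0 :: v = u0 ++ 6 :: 5 :: 0 :: v := by simp
          rw [h7, hL, hR, g1, g2, g3, g4, g5, g6, g7, g8, g9, g10, g11, g12]
          abel
      · -- same position
        obtain ⟨rfl, htl⟩ := List.append_inj hw0 hlen.symm
        simp only [List.cons.injEq] at htl
        obtain ⟨rfl, rfl, rfl⟩ := htl
        exact red_bad hsp
      · -- leftmost bad pair strictly after: impossible
        exfalso
        have hp1 : u ++ [a] ++ [b] <+: u ++ a :: b :: v := ⟨v, by simp⟩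
        have hp2 : u0 ++ [a0] <+: u ++ a :: b :: v := ⟨b0 :: v0, by simp [hw0]⟩
        have hpre : u ++ [a] ++ [b] <+: u0 ++ [a0] :=
          List.prefix_of_prefix_length_le hp1 hp2 (by simp; omega)
        obtain ⟨r, hr⟩ := hpre
        rw [← hr] at hgood0
        simp only [List.append_assoc, List.cons_append, List.nil_append] at hgood0
        exact goodWord_not_bad hgood0 hbad

/-- The action of the generator `x_i` on the free module on words. -/
noncomputable def Lop (k : Type*) [Field k] (i : Fin 7) :
    (List (Fin 7) →₀ k) →ₗ[k] (List (Fin 7) →₀ k) :=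
  Finsupp.lift _ k _ (fun w => red k (i :: w))

lemma Lop_single {k : Type*} [Field k] (i : Fin 7) (w : List (Fin 7)) (c : k) :
    Lop k i (Finsupp.single w c) = c • red k (i :: w) := by
  simp [Lop]

theorem redA (k : Type*) [Field k] :
    ∀ (w : List (Fin 7)) (i : Fin 7), Lop k i (red k w) = red k (i :: w) := by
  suffices H : ∀ N : ℕ, ∀ (w : List (Fin 7)) (i : Fin 7), mu w < N →
      Lop k i (red k w) = red k (i :: w) by
    exact fun w i => H (mu w + 1) w i (Nat.lt_succ_self _)
  intro N
  induction N with
  | zero => intro w i h; omega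
  | succ N IH =>
    intro w i hmu
    cases hsp : splitBad w with
    | none =>
      rw [red_good (splitBad_none.mp hsp), Lop_single, one_smul]
    | some q =>
      obtain ⟨u, a, b, v⟩ := q
      obtain ⟨hw0, hbad0, -⟩ := splitBad_some_spec hsp
      subst hw0
      rw [red_bad hsp, map_sum]
      have hRHS : red k (i :: (u ++ a :: b :: v))
          = ∑ s : Fin 5, coef a b s •
            red k ((i :: u) ++ (rep a b s).1 :: (rep a b s).2 :: v) :=
        redB k (i :: (u ++ a :: b :: v)) (i :: u) v a b rfl hbad0
      rw [hRHS]
      refine Finset.sum_congr rfl fun s _ => ?_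
      rw [map_zsmul]
      congr 1
      have hm : mu (u ++ (rep a b s).1 :: (rep a b s).2 :: v) < mu (u ++ a :: b :: v) :=
        mu_lt_mu u v v a b _ _ (rep_lt a b hbad0 s) rfl
      exact IH (u ++ (rep a b s).1 :: (rep a b s).2 :: v) i (by omega)

lemma epsRed (k : Type*) [Field k] (ℓ : Fin 7) (w : List (Fin 7)) :
    ∑ m : Fin 7, ∑ n : Fin 7, eps ℓ m n • red k (m :: n :: w) = 0 := by
  fin_cases ℓ
  · -- ℓ = 0
    refine (epsExpand_0 (fun m n => red k (m :: n :: w))).trans ?_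
    have hab : red k (6 :: 5 :: w) = _ :=
      (redB k (6 :: 5 :: w) [] w 6 5 rfl (by decide)).trans
        (rwExpand_65 (fun m n => red k (m :: n :: w)))
    rw [hab]
    abel
  · -- ℓ = 1
    refine (epsExpand_1 (fun m n => red k (m :: n :: w))).trans ?_
    have hab : red k (6 :: 4 :: w) = _ :=
      (redB k (6 :: 4 :: w) [] w 6 4 rfl (by decide)).trans
        (rwExpand_64 (fun m n => red k (m :: n :: w)))
    rw [hab]
    abel
  · -- ℓ = 2
    refine (epsExpand_2 (fun m n => red k (m :: n :: w))).trans ?_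
    have hab : red k (6 :: 3 :: w) = _ :=
      (redB k (6 :: 3 :: w) [] w 6 3 rfl (by decide)).trans
        (rwExpand_63 (fun m n => red k (m :: n :: w)))
    rw [hab]
    abel
  · -- ℓ = 3
    refine (epsExpand_3 (fun m n => red k (m :: n :: w))).trans ?_
    have hab : red k (6 :: 2 :: w) = _ :=
      (redB k (6 :: 2 :: w) [] w 6 2 rfl (by decide)).trans
        (rwExpand_62 (fun m n => red k (m :: n :: w)))
    rw [hab]
    abel
  · -- ℓ = 4
    refine (epsExpand_4 (fun m n => red k (m :: n :: w))).trans ?_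
    have hab : red k (6 :: 1 :: w) = _ :=
      (redB k (6 :: 1 :: w) [] w 6 1 rfl (by decide)).trans
        (rwExpand_61 (fun m n => red k (m :: n :: w)))
    rw [hab]
    abel
  · -- ℓ = 5
    refine (epsExpand_5 (fun m n => red k (m :: n :: w))).trans ?_
    have hab : red k (6 :: 0 :: w) = _ :=
      (redB k (6 :: 0 :: w) [] w 6 0 rfl (by decide)).trans
        (rwExpand_60 (fun m n => red k (m :: n :: w)))
    rw [hab]
    abel
  · -- ℓ = 6
    refine (epsExpand_6 (fun m n => red k (m :: n :: w))).trans ?_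
    have hab : red k (5 :: 0 :: w) = _ :=
      (redB k (5 :: 0 :: w) [] w 5 0 rfl (by decide)).trans
        (rwExpand_50 (fun m n => red k (m :: n :: w)))
    rw [hab]
    abel

lemma SmithRel (k : Type*) [Field k] (ℓ : Fin 7) :
    ∑ m : Fin 7, ∑ n : Fin 7, eps ℓ m n • (xg k m * xg k n) = 0 := by
  have h := RingQuot.mkAlgHom_rel k (Arel.mk (k := k) ℓ)
  rw [map_zero] at h
  have h2 : RingQuot.mkAlgHom k (Arel k) (relElem k ℓ)
      = ∑ m : Fin 7, ∑ n : Fin 7, eps ℓ m n • (xg k m * xg k n) := by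
    rw [relElem, map_sum]
    refine Finset.sum_congr rfl fun m _ => ?_
    rw [map_sum]
    refine Finset.sum_congr rfl fun n _ => ?_
    rw [map_zsmul, map_mul]
    rfl
  rw [← h2, h]

lemma xgRel (k : Type*) [Field k] (a b : Fin 7) (h : (a, b) ∈ badPairs) :
    xg k a * xg k b = ∑ s : Fin 5, coef a b s • (xg k (rep a b s).1 * xg k (rep a b s).2) := by
  simp only [badPairs, List.mem_cons, List.not_mem_nil, or_false, Prod.mk.injEq] at h
  rcases h with ⟨rfl, rfl⟩ | ⟨rfl, rfl⟩ | ⟨rfl, rfl⟩ | ⟨rfl, rfl⟩ | ⟨rfl, rfl⟩ | ⟨rfl, rfl⟩ | ⟨rfl, rfl⟩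
  · -- pair (6, 5)
    refine Eq.trans ?_ (rwExpand_65 (fun m n => xg k m * xg k n)).symm
    have h0 : (xg k 1 * xg k 2) - (xg k 2 * xg k 1) + (xg k 3 * xg k 4) - (xg k 4 * xg k 3) + (xg k 5 * xg k 6) - (xg k 6 * xg k 5) = 0 :=
      (epsExpand_0 (fun m n => xg k m * xg k n)).symm.trans (SmithRel k 0)
    rw [← sub_eq_zero]
    have habel : xg k 6 * xg k 5 - ((xg k 1 * xg k 2) - (xg k 2 * xg k 1) + (xg k 3 * xg k 4) - (xg k 4 * xg k 3) + (xg k 5 * xg k 6)) = -((xg k 1 * xg k 2) - (xg k 2 * xg k 1) + (xg k 3 * xg k 4) - (xg k 4 * xg k 3) + (xg k 5 * xg k 6) - (xg k 6 * xg k 5)) := by abel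
    rw [habel, h0, neg_zero]
  · -- pair (6, 4)
    refine Eq.trans ?_ (rwExpand_64 (fun m n => xg k m * xg k n)).symm
    have h0 : -(xg k 0 * xg k 2) + (xg k 2 * xg k 0) + (xg k 3 * xg k 5) - (xg k 4 * xg k 6) - (xg k 5 * xg k 3) + (xg k 6 * xg k 4) = 0 :=
      (epsExpand_1 (fun m n => xg k m * xg k n)).symm.trans (SmithRel k 1)
    rw [← sub_eq_zero]
    have habel : xg k 6 * xg k 4 - ((xg k 0 * xg k 2) - (xg k 2 * xg k 0) - (xg k 3 * xg k 5) + (xg k 4 * xg k 6) + (xg k 5 * xg k 3)) = -(xg k 0 * xg k 2) + (xg k 2 * xg k 0) + (xg k 3 * xg k 5) - (xg k 4 * xg k 6) - (xg k 5 * xg k 3) + (xg k 6 * xg k 4) := by abel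
    rw [habel, h0]
  · -- pair (6, 3)
    refine Eq.trans ?_ (rwExpand_63 (fun m n => xg k m * xg k n)).symm
    have h0 : (xg k 0 * xg k 1) - (xg k 1 * xg k 0) - (xg k 3 * xg k 6) - (xg k 4 * xg k 5) + (xg k 5 * xg k 4) + (xg k 6 * xg k 3) = 0 :=
      (epsExpand_2 (fun m n => xg k m * xg k n)).symm.trans (SmithRel k 2)
    rw [← sub_eq_zero]
    have habel : xg k 6 * xg k 3 - (-(xg k 0 * xg k 1) + (xg k 1 * xg k 0) + (xg k 3 * xg k 6) + (xg k 4 * xg k 5) - (xg k 5 * xg k 4)) = (xg k 0 * xg k 1) - (xg k 1 * xg k 0) - (xg k 3 * xg k 6) - (xg k 4 * xg k 5) + (xg k 5 * xg k 4) + (xg k 6 * xg k 3) := by abel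
    rw [habel, h0]
  · -- pair (6, 2)
    refine Eq.trans ?_ (rwExpand_62 (fun m n => xg k m * xg k n)).symm
    have h0 : -(xg k 0 * xg k 4) - (xg k 1 * xg k 5) + (xg k 2 * xg k 6) + (xg k 4 * xg k 0) + (xg k 5 * xg k 1) - (xg k 6 * xg k 2) = 0 :=
      (epsExpand_3 (fun m n => xg k m * xg k n)).symm.trans (SmithRel k 3)
    rw [← sub_eq_zero]
    have habel : xg k 6 * xg k 2 - (-(xg k 0 * xg k 4) - (xg k 1 * xg k 5) + (xg k 2 * xg k 6) + (xg k 4 * xg k 0) + (xg k 5 * xg k 1)) = -(-(xg k 0 * xg k 4) - (xg k 1 * xg k 5) + (xg k 2 * xg k 6) + (xg k 4 * xg k 0) + (xg k 5 * xg k 1) - (xg k 6 * xg k 2)) := by abel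
    rw [habel, h0, neg_zero]
  · -- pair (6, 1)
    refine Eq.trans ?_ (rwExpand_61 (fun m n => xg k m * xg k n)).symm
    have h0 : (xg k 0 * xg k 3) + (xg k 1 * xg k 6) + (xg k 2 * xg k 5) - (xg k 3 * xg k 0) - (xg k 5 * xg k 2) - (xg k 6 * xg k 1) = 0 :=
      (epsExpand_4 (fun m n => xg k m * xg k n)).symm.trans (SmithRel k 4)
    rw [← sub_eq_zero]
    have habel : xg k 6 * xg k 1 - ((xg k 0 * xg k 3) + (xg k 1 * xg k 6) + (xg k 2 * xg k 5) - (xg k 3 * xg k 0) - (xg k 5 * xg k 2)) = -((xg k 0 * xg k 3) + (xg k 1 * xg k 6) + (xg k 2 * xg k 5) - (xg k 3 * xg k 0) - (xg k 5 * xg k 2) - (xg k 6 * xg k 1)) := by abel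
    rw [habel, h0, neg_zero]
  · -- pair (6, 0)
    refine Eq.trans ?_ (rwExpand_60 (fun m n => xg k m * xg k n)).symm
    have h0 : -(xg k 0 * xg k 6) + (xg k 1 * xg k 3) - (xg k 2 * xg k 4) - (xg k 3 * xg k 1) + (xg k 4 * xg k 2) + (xg k 6 * xg k 0) = 0 :=
      (epsExpand_5 (fun m n => xg k m * xg k n)).symm.trans (SmithRel k 5)
    rw [← sub_eq_zero]
    have habel : xg k 6 * xg k 0 - ((xg k 0 * xg k 6) - (xg k 1 * xg k 3) + (xg k 2 * xg k 4) + (xg k 3 * xg k 1) - (xg k 4 * xg k 2)) = -(xg k 0 * xg k 6) + (xg k 1 * xg k 3) - (xg k 2 * xg k 4) - (xg k 3 * xg k 1) + (xg k 4 * xg k 2) + (xg k 6 * xg k 0) := by abel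
    rw [habel, h0]
  · -- pair (5, 0)
    refine Eq.trans ?_ (rwExpand_50 (fun m n => xg k m * xg k n)).symm
    have h0 : (xg k 0 * xg k 5) - (xg k 1 * xg k 4) - (xg k 2 * xg k 3) + (xg k 3 * xg k 2) + (xg k 4 * xg k 1) - (xg k 5 * xg k 0) = 0 :=
      (epsExpand_6 (fun m n => xg k m * xg k n)).symm.trans (SmithRel k 6)
    rw [← sub_eq_zero]
    have habel : xg k 5 * xg k 0 - ((xg k 0 * xg k 5) - (xg k 1 * xg k 4) - (xg k 2 * xg k 3) + (xg k 3 * xg k 2) + (xg k 4 * xg k 1)) = -((xg k 0 * xg k 5) - (xg k 1 * xg k 4) - (xg k 2 * xg k 3) + (xg k 3 * xg k 2) + (xg k 4 * xg k 1) - (xg k 5 * xg k 0)) := by abel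
    rw [habel, h0, neg_zero]

/-! ### The representation on the free module and linear independence -/

noncomputable def Fop (k : Type*) [Field k] :
    FreeAlgebra k (Fin 7) →ₐ[k] Module.End k (List (Fin 7) →₀ k) :=
  FreeAlgebra.lift k (fun i => Lop k i)

lemma Fop_rel (k : Type*) [Field k] (ℓ : Fin 7) : Fop k (relElem k ℓ) = 0 := by
  have h2 : Fop k (relElem k ℓ)
      = ∑ m : Fin 7, ∑ n : Fin 7, eps ℓ m n • (Lop k m * Lop k n) := by
    rw [relElem, map_sum]
    refine Finset.sum_congr rfl fun m _ => ?_
    rw [map_sum]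
    refine Finset.sum_congr rfl fun n _ => ?_
    rw [map_zsmul, map_mul, Fop, FreeAlgebra.lift_ι_apply, FreeAlgebra.lift_ι_apply]
  rw [h2]
  apply Finsupp.lhom_ext
  intro w c
  rw [LinearMap.zero_apply]
  simp only [LinearMap.sum_apply, LinearMap.smul_apply, Module.End.mul_apply, Lop_single,
    map_smul, redA]
  have hc : ∀ m n : Fin 7, eps ℓ m n • (c • red k (m :: n :: w))
      = c • (eps ℓ m n • red k (m :: n :: w)) := fun m n => smul_comm _ _ _
  simp_rw [hc, ← Finset.smul_sum]
  rw [epsRed, smul_zero]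

noncomputable def Phi (k : Type*) [Field k] :
    SmithA k →ₐ[k] Module.End k (List (Fin 7) →₀ k) :=
  RingQuot.liftAlgHom k ⟨Fop k, by rintro x y ⟨ℓ⟩; rw [Fop_rel, map_zero]⟩

lemma Phi_xg (k : Type*) [Field k] (i : Fin 7) : Phi k (xg k i) = Lop k i := by
  rw [xg, Phi, RingQuot.liftAlgHom_mkAlgHom_apply, Fop, FreeAlgebra.lift_ι_apply]

lemma Phi_prod (k : Type*) [Field k] (w : List (Fin 7)) :
    Phi k ((w.map (xg k)).prod) (Finsupp.single [] 1) = red k w := by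
  induction w with
  | nil =>
    rw [List.map_nil, List.prod_nil, map_one, Module.End.one_apply,
      red_good (by simp [GoodWord, List.Chain'])]
  | cons i t ih =>
    rw [List.map_cons, List.prod_cons, map_mul, Module.End.mul_apply, ih, Phi_xg, redA]

noncomputable def psi (k : Type*) [Field k] : SmithA k →ₗ[k] (List (Fin 7) →₀ k) where
  toFun z := Phi k z (Finsupp.single [] 1)
  map_add' x y := by rw [map_add, LinearMap.add_apply]
  map_smul' c x := by rw [map_smul, LinearMap.smul_apply]; rfl

lemma smithA_linearIndependent (k : Type*) [Field k] :
    LinearIndependent k (fun w : {w : List (Fin 7) // GoodWord w} =>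
      ((w : List (Fin 7)).map (xg k)).prod) := by
  apply LinearIndependent.of_comp (psi k)
  have hcomp : (psi k) ∘ (fun w : {w : List (Fin 7) // GoodWord w} =>
      ((w : List (Fin 7)).map (xg k)).prod)
      = fun w : {w : List (Fin 7) // GoodWord w} =>
        Finsupp.single (w : List (Fin 7)) (1 : k) := by
    funext w
    show Phi k (((w : List (Fin 7)).map (xg k)).prod) (Finsupp.single [] 1) = _
    rw [Phi_prod, red_good w.2]
  rw [hcomp]
  have hb : LinearIndependent k (fun i : List (Fin 7) => Finsupp.single i (1 : k)) := by
    have := (Finsupp.basisSingleOne (R := k) (ι := List (Fin 7))).linearIndependent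
    simpa [Finsupp.coe_basisSingleOne] using this
  exact hb.comp Subtype.val Subtype.val_injective

lemma span_words (k : Type*) [Field k] :
    ∀ w : List (Fin 7), ((w.map (xg k)).prod) ∈ Submodule.span k
      (Set.range (fun w : {w : List (Fin 7) // GoodWord w} =>
        ((w : List (Fin 7)).map (xg k)).prod)) := by
  suffices H : ∀ N : ℕ, ∀ w : List (Fin 7), mu w < N → ((w.map (xg k)).prod) ∈ Submodule.span k
      (Set.range (fun w : {w : List (Fin 7) // GoodWord w} =>
        ((w : List (Fin 7)).map (xg k)).prod)) by
    exact fun w => H (mu w + 1) w (Nat.lt_succ_self _)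
  intro N
  induction N with
  | zero => intro w h; omega
  | succ N IH =>
    intro w hmu
    cases hsp : splitBad w with
    | none => exact Submodule.subset_span ⟨⟨w, splitBad_none.mp hsp⟩, rfl⟩
    | some q =>
      obtain ⟨u, a, b, v⟩ := q
      obtain ⟨hw0, hbad0, -⟩ := splitBad_some_spec hsp
      subst hw0
      have h1 : (((u ++ a :: b :: v).map (xg k)).prod)
          = (u.map (xg k)).prod * ((xg k a * xg k b) * ((v.map (xg k)).prod)) := by
        simp [List.prod_append, mul_assoc]
      rw [h1, xgRel k a b hbad0, Finset.sum_mul, Finset.mul_sum]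
      refine Submodule.sum_mem _ fun s _ => ?_
      have h2 : (u.map (xg k)).prod *
            ((coef a b s • (xg k (rep a b s).1 * xg k (rep a b s).2)) * (v.map (xg k)).prod)
          = coef a b s • (((u ++ (rep a b s).1 :: (rep a b s).2 :: v).map (xg k)).prod) := by
        rw [smul_mul_assoc, mul_smul_comm]
        congr 1
        simp [List.prod_append, mul_assoc]
      rw [h2]
      have hm : mu (u ++ (rep a b s).1 :: (rep a b s).2 :: v) < mu (u ++ a :: b :: v) :=
        mu_lt_mu u v v a b _ _ (rep_lt a b hbad0 s) rfl
      exact zsmul_mem (IH _ (by omega)) _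

/-- STATEMENT 6: the images in `A_k` of the words in `x_1,…,x_7` containing none of
`x_7x_6, x_7x_5, x_7x_4, x_7x_3, x_7x_2, x_7x_1, x_6x_1` as a subword form a `k`-vector
space basis of `A_k`. -/
theorem SmithA_goodWord_basis (k : Type*) [Field k] :
    LinearIndependent k (fun w : {w : List (Fin 7) // GoodWord w} =>
        ((w : List (Fin 7)).map (xg k)).prod) ∧
      Submodule.span k
        (Set.range (fun w : {w : List (Fin 7) // GoodWord w} =>
          ((w : List (Fin 7)).map (xg k)).prod)) = ⊤ := by
  refine ⟨smithA_linearIndependent k, ?_⟩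
  set T := Submodule.span k
    (Set.range (fun w : {w : List (Fin 7) // GoodWord w} =>
      ((w : List (Fin 7)).map (xg k)).prod)) with hT
  rw [eq_top_iff]
  rintro z -
  obtain ⟨y, rfl⟩ := RingQuot.mkAlgHom_surjective k (Arel k) z
  induction y using FreeAlgebra.induction with
  | grade0 r =>
    rw [AlgHom.commutes, Algebra.algebraMap_eq_smul_one]
    have h1 : (1 : SmithA k) = (([] : List (Fin 7)).map (xg k)).prod := by simp
    rw [h1]
    exact Submodule.smul_mem _ _ (span_words k [])
  | grade1 i =>
    have h1 : RingQuot.mkAlgHom k (Arel k) (FreeAlgebra.ι k i)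
        = (([i] : List (Fin 7)).map (xg k)).prod := by simp [xg]
    rw [h1]
    exact span_words k [i]
  | mul x y hx hy =>
    rw [map_mul]
    have hmul : T * T ≤ T := by
      rw [hT, Submodule.span_mul_span]
      refine Submodule.span_le.mpr ?_
      rintro t ⟨p, ⟨wp, rfl⟩, q, ⟨wq, rfl⟩, rfl⟩
      have : ((wp : List (Fin 7)).map (xg k)).prod * ((wq : List (Fin 7)).map (xg k)).prod
          = (((wp : List (Fin 7)) ++ (wq : List (Fin 7))).map (xg k)).prod := by
        rw [List.map_append, List.prod_append]
      show ((wp : List (Fin 7)).map (xg k)).prod * ((wq : List (Fin 7)).map (xg k)).prod ∈ _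
      rw [this]
      exact span_words k _
    exact hmul (Submodule.mul_mem_mul hx hy)
  | add x y hx hy =>
    rw [map_add]
    exact Submodule.add_mem _ hx hy
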